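/- Let δ_{2m} (m ≥ 1) be the derivation of the free Lie algebra L(T,A) defined by δ_{2m}(T) = -ad_T^{2m}(A) and δ_{2m}(A) = Σ_{j>k≥0, j+k=2m-1} (-1)^{j+1}[ad_T^j(A), ad_T^k(A)]. Then δ_{2m}([T,A]) = 0. -/

import Mathlib

open scoped BigOperators

noncomputable section

namespace Stmt15

abbrev L := FreeLieAlgebra ℚ (Fin 2)

def T : L := FreeLieAlgebra.of ℚ 0

def A : L := FreeLieAlgebra.of ℚ 1

def ad : Module.End ℚ L := LieAlgebra.ad ℚ L T

lemma ad_lie (x : L) : ⁅T, x⁆ = ad x := rfl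

lemma ad_succ (n : ℕ) : (ad ^ (n + 1)) A = ⁅T, (ad ^ n) A⁆ := by
  rw [pow_succ', Module.End.mul_apply, ad_lie]

/-- For `m ≥ 1`, the derivation `δ_{2m}` of the free Lie algebra `L(T,A)` determined by
`δ_{2m}(T) = -ad_T^{2m}(A)` and
`δ_{2m}(A) = ∑_{j>k≥0, j+k=2m-1} (-1)^{j+1} [ad_T^j(A), ad_T^k(A)]`
annihilates `[T,A]`. -/
theorem delta_annihilates_bracket (m : ℕ) (hm : 1 ≤ m) (D : LieDerivation ℚ L L)
    (hT : D T = -((ad ^ (2 * m)) A))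
    (hA : D A = ∑ p ∈ (Finset.HasAntidiagonal.antidiagonal (2 * m - 1)).filter (fun p => p.2 < p.1),
        ((-1 : ℚ) ^ (p.1 + 1)) • ⁅(ad ^ p.1) A, (ad ^ p.2) A⁆) :
    D ⁅T, A⁆ = 0 := by
  set g : ℕ → L := fun j => ((-1 : ℚ) ^ (j + 1)) • ⁅(ad ^ (j + 1)) A, (ad ^ (2 * m - 1 - j)) A⁆
    with hg
  have hset : (Finset.HasAntidiagonal.antidiagonal (2 * m - 1)).filter (fun p => p.2 < p.1)
      = (Finset.Ico m (2 * m)).map ⟨fun j => (j, 2 * m - 1 - j), show Function.Injective _ from fun a b h => by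
          simpa using congrArg Prod.fst h⟩ := by
    ext ⟨j, k⟩
    simp only [Finset.mem_filter, Finset.HasAntidiagonal.mem_antidiagonal, Finset.mem_map, Finset.mem_Ico,
      Function.Embedding.coeFn_mk, Prod.mk.injEq]
    constructor
    · rintro ⟨h1, h2⟩; exact ⟨j, ⟨by omega, by omega⟩, rfl, by omega⟩
    · rintro ⟨a, ⟨ha1, ha2⟩, rfl, rfl⟩; omega
  rw [D.apply_lie_eq_add, hT, hA, hset, Finset.sum_map, ad_lie, map_sum]
  have hterm : ∀ j ∈ Finset.Ico m (2 * m),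
      ad (((-1 : ℚ) ^ (j + 1)) • ⁅(ad ^ j) A, (ad ^ (2 * m - 1 - j)) A⁆)
        = g j - g (j - 1) := by
    intro j hj
    simp only [Finset.mem_Ico] at hj
    obtain ⟨j, rfl⟩ : ∃ i, j = i + 1 := ⟨j - 1, by omega⟩
    have h1 : 2 * m - 1 - (j + 1) + 1 = 2 * m - 1 - j := by omega
    rw [map_smul, ← ad_lie, leibniz_lie, ← ad_succ, ← ad_succ, h1, smul_add]
    simp only [hg, Nat.add_sub_cancel]
    rw [sub_eq_add_neg]
    congr 1
    rw [pow_succ (-1 : ℚ) (j + 1), mul_comm, neg_one_mul, neg_smul]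
  simp only [Function.Embedding.coeFn_mk]
  rw [Finset.sum_congr rfl hterm]
  have htel : ∑ j ∈ Finset.Ico m (2 * m), (g j - g (j - 1)) = g (2 * m - 1) - g (m - 1) := by
    rw [Finset.sum_Ico_eq_sum_range]
    have : ∀ i ∈ Finset.range (2 * m - m), g (m + i) - g (m + i - 1)
        = g (m - 1 + (i + 1)) - g (m - 1 + i) := by
      intro i _
      congr 2 <;> omega
    rw [Finset.sum_congr rfl this, Finset.sum_range_sub (fun i => g (m - 1 + i))]
    congr 2 <;> omega
  rw [htel]
  have h1 : g (2 * m - 1) = ⁅(ad ^ (2 * m)) A, A⁆ := by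
    have e1 : 2 * m - 1 + 1 = 2 * m := by omega
    have e2 : 2 * m - 1 - (2 * m - 1) = 0 := by omega
    have e3 : (-1 : ℚ) ^ (2 * m) = 1 := by
      rw [pow_mul]; norm_num
    simp only [hg, e1, e2, e3, pow_zero, Module.End.one_apply, one_smul]
  have h2 : g (m - 1) = 0 := by
    have e1 : m - 1 + 1 = m := by omega
    have e2 : 2 * m - 1 - (m - 1) = m := by omega
    simp only [hg, e1, e2, lie_self, smul_zero]
  rw [h1, h2, sub_zero, neg_lie, add_neg_cancel]

end Stmt15
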